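/- Let s ≥ 2 and k ≥ 3 be integers and let ∑_{i∈W} a_i x_i + a^0 ∑_{i∉W} x_i ≥ (s+1)a^0 be a facet defining (s+1)-inequality of Q(C_{sk}^k). Then there exists a simple directed cycle in G(C_{sk}^k) having exactly k arcs of length k+1 whose heads are precisely the elements of W, and n_2 arcs of length k, such that, setting n_1 = (n_2 + k + 1)/s (a positive integer), k' = k − n_1 and n' = sk − n_2 − k, one has k' ≥ 1 and n' = s·k' + 1; in particular ⌈n'/k'⌉ = s+1 > ⌈(sk)/k⌉ = s, so the inequality is the minor inequality of a relevant circulant minor isomorphic to C_{n'}^{k'} with n' ≡ 1 (mod k'). -/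

import Mathlib

/-- `Cseg n k i` is the set `C^i = {i, i+1, …, i+k−1} ⊆ ℤ_n`. -/
def Cseg (n k : ℕ) (i : ZMod n) : Finset (ZMod n) :=
  (Finset.range k).image fun h : ℕ => i + (h : ZMod n)

/-- A cover of the circulant matrix `C_n^k`. -/
def IsCover (n k : ℕ) (x : Finset (ZMod n)) : Prop :=
  ∀ i : ZMod n, (x ∩ Cseg n k i).Nonempty

/-- A minimal cover of `C_n^k`. -/
def IsMinimalCover (n k : ℕ) (x : Finset (ZMod n)) : Prop :=
  IsCover n k x ∧ ∀ y : Finset (ZMod n), y ⊂ x → ¬ IsCover n k y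

/-- The covering number `τ(C_n^k)`. -/
noncomputable def coveringNumber (n k : ℕ) : ℕ :=
  sInf {m : ℕ | ∃ x : Finset (ZMod n), IsCover n k x ∧ x.card = m}

/-- A minimum cover of `C_n^k`. -/
noncomputable def IsMinimumCover (n k : ℕ) (x : Finset (ZMod n)) : Prop :=
  IsCover n k x ∧ x.card = coveringNumber n k

/-- `xcov n k i` is the cover `x^i = {i + h·k : 0 ≤ h ≤ ⌈n/k⌉ − 1}`. -/
def xcov (n k : ℕ) (i : ZMod n) : Finset (ZMod n) :=
  (Finset.range ((n + k - 1) / k)).image fun h : ℕ => i + ((h * k : ℕ) : ZMod n)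

/-- The cyclic closed interval `[a,b]_n` of `ℤ_n`. -/
def cycInterval (n : ℕ) (a b : ZMod n) : Finset (ZMod n) :=
  (Finset.range ((b - a).val + 1)).image fun h : ℕ => a + (h : ZMod n)

/-- The inequality `a·x ≥ α` is valid for `Q(C_n^k)`. -/
def IsValid (n k : ℕ) (a : ZMod n → ℤ) (α : ℤ) : Prop :=
  ∀ x : Finset (ZMod n), IsCover n k x → α ≤ ∑ i ∈ x, a i

/-- A root of a valid inequality: a cover satisfying it with equality. -/
def IsRoot (n k : ℕ) (a : ZMod n → ℤ) (α : ℤ) (x : Finset (ZMod n)) : Prop :=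
  IsCover n k x ∧ ∑ i ∈ x, a i = α

/-- Characteristic vector of a subset of `ℤ_n`. -/
noncomputable def charVec (n : ℕ) (x : Finset (ZMod n)) : ZMod n → ℝ :=
  fun i => if i ∈ x then 1 else 0

/-- `a·x ≥ α` is facet defining for `Q(C_n^k)`: it is valid, and the characteristic
vectors of its roots affinely span an `(n−1)`-dimensional affine subspace of `ℝ^n`. -/
def IsFacet (n k : ℕ) (a : ZMod n → ℤ) (α : ℤ) : Prop :=
  IsValid n k a α ∧
    Module.finrank ℝ
      (affineSpan ℝ
        {v : ZMod n → ℝ | ∃ x : Finset (ZMod n), IsRoot n k a α x ∧ v = charVec n x}).direction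
      = n - 1

/-- `a·x ≥ α` is a positive multiple of one of the boolean inequalities
`x_i ≥ 0`, `−x_i ≥ −1`, `∑_{j ∈ C^i} x_j ≥ 1`. -/
def IsBooleanMultiple (n k : ℕ) (a : ZMod n → ℤ) (α : ℤ) : Prop :=
  ∃ c : ℤ, 0 < c ∧
    ( (∃ i : ZMod n, (∀ j, a j = if j = i then c else 0) ∧ α = 0)
    ∨ (∃ i : ZMod n, (∀ j, a j = if j = i then -c else 0) ∧ α = -c)
    ∨ (∃ i : ZMod n, (∀ j, a j = if j ∈ Cseg n k i then c else 0) ∧ α = c) )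

/-- `a·x ≥ α` is a positive multiple of the rank constraint `∑ x_i ≥ ⌈n/k⌉`. -/
def IsRankMultiple (n k : ℕ) (a : ZMod n → ℤ) (α : ℤ) : Prop :=
  ∃ c : ℤ, 0 < c ∧ (∀ j, a j = c) ∧ α = c * (((n + k - 1) / k : ℕ) : ℤ)

/-- A simple directed cycle in the digraph `G(C_n^k)` (vertex set `ℤ_n`, arcs
`i → i+k` of length `k` and `i → i+k+1` of length `k+1`): a cyclic sequence of
`m ≥ 1` pairwise distinct vertices each consecutive pair of which is an arc. -/
structure SimpleDicycle (n k : ℕ) where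
  m : ℕ
  hm : 0 < m
  v : ZMod m → ZMod n
  inj : Function.Injective v
  step : ∀ t : ZMod m,
    v (t + 1) = v t + ((k : ℕ) : ZMod n) ∨ v (t + 1) = v t + ((k + 1 : ℕ) : ZMod n)

namespace Stmt11Aux

theorem cover_exists {s k : ℕ} (hs : 0 < s) (hk : 0 < k) {x : Finset (ZMod (s*k))}
    (hx : IsCover (s*k) k x) (i : ZMod (s*k)) :
    ∃ e ∈ x, ∃ h < k, e = i + (h : ZMod (s*k)) := by
  obtain ⟨e, he⟩ := hx i
  rw [Finset.mem_inter] at he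
  obtain ⟨he1, he2⟩ := he
  simp only [Cseg, Finset.mem_image, Finset.mem_range] at he2
  obtain ⟨h, hh, rfl⟩ := he2
  exact ⟨_, he1, h, hh, rfl⟩

/-- For each row, pick a covering element together with its offset. -/
noncomputable def pick {s k : ℕ} (hs : 0 < s) (hk : 0 < k) {x : Finset (ZMod (s*k))}
    (hx : IsCover (s*k) k x) (i : ZMod (s*k)) : ZMod (s*k) × ℕ :=
  (⟨(cover_exists hs hk hx i).choose,
    (cover_exists hs hk hx i).choose_spec.2.choose⟩ : ZMod (s*k) × ℕ)

theorem pick_spec {s k : ℕ} (hs : 0 < s) (hk : 0 < k) {x : Finset (ZMod (s*k))}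
    (hx : IsCover (s*k) k x) (i : ZMod (s*k)) :
    (pick hs hk hx i).1 ∈ x ∧ (pick hs hk hx i).2 < k ∧
      (pick hs hk hx i).1 = i + ((pick hs hk hx i).2 : ZMod (s*k)) := by
  obtain ⟨h1, h2⟩ := (cover_exists hs hk hx i).choose_spec
  exact ⟨h1, h2.choose_spec.1, h2.choose_spec.2⟩

theorem pick_injective {s k : ℕ} (hs : 0 < s) (hk : 0 < k) {x : Finset (ZMod (s*k))}
    (hx : IsCover (s*k) k x) : Function.Injective (pick hs hk hx) := by
  intro i j hij
  have hi := pick_spec hs hk hx i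
  have hj := pick_spec hs hk hx j
  have : i + ((pick hs hk hx i).2 : ZMod (s*k)) = j + ((pick hs hk hx j).2 : ZMod (s*k)) := by
    rw [← hi.2.2, ← hj.2.2, hij]
  rw [hij] at this
  exact add_right_cancel this

theorem card_cover_ge {s k : ℕ} (hs : 0 < s) (hk : 0 < k) {x : Finset (ZMod (s*k))}
    (hx : IsCover (s*k) k x) : s ≤ x.card := by
  haveI : NeZero (s*k) := ⟨by positivity⟩
  have h1 : (Finset.univ : Finset (ZMod (s*k))).card ≤ (x ×ˢ Finset.range k).card := by
    apply Finset.card_le_card_of_injOn (pick hs hk hx)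
    · intro i _
      have := pick_spec hs hk hx i
      exact Finset.mem_product.2 ⟨this.1, Finset.mem_range.2 this.2.1⟩
    · intro i _ j _ h
      exact pick_injective hs hk hx h
  rw [Finset.card_univ, ZMod.card, Finset.card_product, Finset.card_range] at h1
  exact Nat.le_of_mul_le_mul_right h1 hk

/-- A cover of cardinality `s` is closed under `+k`. -/
theorem cover_card_eq_closed {s k : ℕ} (hs : 0 < s) (hk : 0 < k) {x : Finset (ZMod (s*k))}
    (hx : IsCover (s*k) k x) (hcard : x.card = s) :
    ∀ e ∈ x, e + ((k : ℕ) : ZMod (s*k)) ∈ x := by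
  haveI : NeZero (s*k) := ⟨by positivity⟩
  -- F : pairs → Z_n, (e,h) ↦ e − h is injective on x ×ˢ range k
  have hsurj : ∀ i ∈ (Finset.univ : Finset (ZMod (s*k))),
      ∃ p ∈ x ×ˢ Finset.range k, p.1 - ((p.2 : ℕ) : ZMod (s*k)) = i := by
    intro i _
    obtain ⟨e, he, h, hh, hee⟩ := cover_exists hs hk hx i
    refine ⟨⟨e, h⟩, Finset.mem_product.2 ⟨he, Finset.mem_range.2 hh⟩, ?_⟩
    rw [hee]; ring
  have hcards : (x ×ˢ Finset.range k).card ≤ (Finset.univ : Finset (ZMod (s*k))).card := by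
    rw [Finset.card_univ, ZMod.card, Finset.card_product, Finset.card_range, hcard]
  have hinj : ∀ p₁ ∈ x ×ˢ Finset.range k, ∀ p₂ ∈ x ×ˢ Finset.range k,
      p₁.1 - ((p₁.2 : ℕ) : ZMod (s*k)) = p₂.1 - ((p₂.2 : ℕ) : ZMod (s*k)) → p₁ = p₂ := by
    intro p₁ h₁ p₂ h₂ h
    exact Finset.inj_on_of_surj_on_of_card_le (fun p _ => p.1 - ((p.2 : ℕ) : ZMod (s*k)))
      (fun p hp => Finset.mem_univ _)
      (fun i hi => by obtain ⟨p, hp, hpi⟩ := hsurj i hi; exact ⟨p, hp, hpi⟩) hcards h₁ h₂ h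
  intro e he
  obtain ⟨e', he', h, hh, hee⟩ := cover_exists hs hk hx (e + 1)
  -- e' = e + 1 + h, h < k.  If h < k - 1 then (e', h+1) and (e, 0) map to same value.
  by_cases hcase : h = k - 1
  · have : e' = e + ((k : ℕ) : ZMod (s*k)) := by
      rw [hee, hcase]
      have : ((k - 1 : ℕ) : ZMod (s*k)) + 1 = ((k : ℕ) : ZMod (s*k)) := by
        have : (k - 1) + 1 = k := Nat.succ_pred_eq_of_pos hk
        rw [← this]; push_cast [Nat.cast_add]; ring
      rw [add_assoc, add_comm (1 : ZMod (s*k)), this]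
    rwa [← this]
  · exfalso
    have hh1 : h + 1 < k := by omega
    have h1 : ((e', h+1) : ZMod (s*k) × ℕ) ∈ x ×ˢ Finset.range k :=
      Finset.mem_product.2 ⟨he', Finset.mem_range.2 hh1⟩
    have h2 : ((e, 0) : ZMod (s*k) × ℕ) ∈ x ×ˢ Finset.range k :=
      Finset.mem_product.2 ⟨he, Finset.mem_range.2 hk⟩
    have h3 : e' - (((h+1 : ℕ)) : ZMod (s*k)) = e - ((0 : ℕ) : ZMod (s*k)) := by
      rw [hee]; push_cast; ring
    have := hinj _ h1 _ h2 h3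
    simp at this

/-- The class map `ℤ_{sk} → ℤ_k`. -/
def phi (s k : ℕ) : ZMod (s*k) →+* ZMod k := ZMod.castHom ⟨s, mul_comm s k⟩ (ZMod k)

theorem phi_natCast (s k : ℕ) (m : ℕ) : phi s k ((m : ℕ) : ZMod (s*k)) = (m : ZMod k) :=
  map_natCast _ m

theorem phi_k (s k : ℕ) : phi s k ((k : ℕ) : ZMod (s*k)) = 0 := by
  rw [phi_natCast]; exact ZMod.natCast_self k

theorem phi_ker {s k : ℕ} (hs : 0 < s) (hk : 0 < k) {z : ZMod (s*k)} (hz : phi s k z = 0) :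
    ∃ t < s, z = ((t*k : ℕ) : ZMod (s*k)) := by
  haveI : NeZero (s*k) := ⟨by positivity⟩
  have hzv : ((z.val : ℕ) : ZMod (s*k)) = z := ZMod.natCast_rightInverse z
  have h1 : ((z.val : ℕ) : ZMod k) = 0 := by rw [← phi_natCast s k, hzv, hz]
  have h2 : k ∣ z.val := (ZMod.natCast_eq_zero_iff _ _).1 h1
  obtain ⟨t, ht⟩ := h2
  refine ⟨t, ?_, ?_⟩
  · have hlt := z.val_lt
    rw [ht] at hlt
    by_contra hc
    push_neg at hc
    have : s * k ≤ k * t := by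
      calc s * k = k * s := mul_comm s k
        _ ≤ k * t := Nat.mul_le_mul_left k hc
    omega
  · rw [← hzv, ht, mul_comm k t]

theorem mulk_inj {s k : ℕ} (hs : 0 < s) (hk : 0 < k) {t t' : ℕ} (ht : t < s) (ht' : t' < s)
    (h : ((t*k : ℕ) : ZMod (s*k)) = ((t'*k : ℕ) : ZMod (s*k))) : t = t' := by
  haveI : NeZero (s*k) := ⟨by positivity⟩
  have h1 : t * k < s * k := (Nat.mul_lt_mul_right hk).2 ht
  have h2 : t' * k < s * k := (Nat.mul_lt_mul_right hk).2 ht'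
  have := congrArg ZMod.val h
  rw [ZMod.val_natCast_of_lt h1, ZMod.val_natCast_of_lt h2] at this
  exact Nat.eq_of_mul_eq_mul_right hk this

theorem closed_mem {s k : ℕ} {x : Finset (ZMod (s*k))}
    (hcl : ∀ e ∈ x, e + ((k : ℕ) : ZMod (s*k)) ∈ x) {e : ZMod (s*k)} (he : e ∈ x) (t : ℕ) :
    e + ((t*k : ℕ) : ZMod (s*k)) ∈ x := by
  induction t with
  | zero => simpa using he
  | succ t ih =>
      have := hcl _ ih
      have heq : e + ((t*k : ℕ) : ZMod (s*k)) + ((k:ℕ) : ZMod (s*k))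
          = e + (((t+1)*k : ℕ) : ZMod (s*k)) := by push_cast; ring
      rwa [heq] at this

/-- The residue class of `c` as a finset of `ℤ_{sk}`. -/
def classF (s k : ℕ) [NeZero (s*k)] (c : ZMod k) : Finset (ZMod (s*k)) :=
  Finset.univ.filter (fun z => phi s k z = c)

theorem mem_classF {s k : ℕ} [NeZero (s*k)] {c : ZMod k} {z : ZMod (s*k)} :
    z ∈ classF s k c ↔ phi s k z = c := by simp [classF]

theorem classF_eq_image {s k : ℕ} [NeZero (s*k)] (hs : 0 < s) (hk : 0 < k) (c : ZMod k) :
    classF s k c = (Finset.range s).image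
      (fun t => ((c.val : ℕ) : ZMod (s*k)) + ((t*k : ℕ) : ZMod (s*k))) := by
  haveI : NeZero k := ⟨by omega⟩
  have hz₀ : phi s k ((c.val : ℕ) : ZMod (s*k)) = c := by
    rw [phi_natCast]; exact ZMod.natCast_rightInverse c
  ext z
  simp only [mem_classF, Finset.mem_image, Finset.mem_range]
  constructor
  · intro hz
    have : phi s k (z - ((c.val : ℕ) : ZMod (s*k))) = 0 := by
      rw [map_sub, hz, hz₀, sub_self]
    obtain ⟨t, ht, hteq⟩ := phi_ker hs hk this
    exact ⟨t, ht, by rw [← hteq]; ring⟩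
  · rintro ⟨t, ht, rfl⟩
    rw [map_add, hz₀, phi_natCast]
    have : ((t*k : ℕ) : ZMod k) = 0 := by
      simp [Nat.cast_mul, ZMod.natCast_self]
    rw [this, add_zero]

theorem card_classF {s k : ℕ} [NeZero (s*k)] (hs : 0 < s) (hk : 0 < k) (c : ZMod k) :
    (classF s k c).card = s := by
  rw [classF_eq_image hs hk c, Finset.card_image_of_injOn, Finset.card_range]
  intro t ht t' ht' h
  simp only [Finset.coe_range, Set.mem_Iio] at ht ht'
  exact mulk_inj hs hk ht ht' (by exact add_left_cancel h)

theorem classF_isCover {s k : ℕ} [NeZero (s*k)] (hs : 0 < s) (hk : 0 < k) (c : ZMod k) :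
    IsCover (s*k) k (classF s k c) := by
  haveI : NeZero k := ⟨by omega⟩
  intro i
  set h : ℕ := (c - phi s k i).val with hh
  refine ⟨i + (h : ZMod (s*k)), Finset.mem_inter.2 ⟨?_, ?_⟩⟩
  · rw [mem_classF, map_add, phi_natCast, hh]
    rw [ZMod.natCast_val, ZMod.cast_id]
    ring
  · exact Finset.mem_image.2 ⟨h, Finset.mem_range.2 ((c - phi s k i).val_lt), rfl⟩


/-- Each residue class meets `W`, given validity. -/
theorem class_meets_W {s k : ℕ} [NeZero (s*k)] (hs : 2 ≤ s) (hk : 3 ≤ k)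
    (W : Finset (ZMod (s*k))) (a : ZMod (s*k) → ℤ) (a0 : ℤ) (ha0 : 1 ≤ a0)
    (hvalid : IsValid (s*k) k (fun i => if i ∈ W then a i else a0) (((s : ℤ) + 1) * a0))
    (c : ZMod k) : ∃ w ∈ classF s k c, w ∈ W := by
  by_contra hc
  push_neg at hc
  have h1 := hvalid _ (classF_isCover (by omega) (by omega) c)
  have h2 : ∑ i ∈ classF s k c, (fun i => if i ∈ W then a i else a0) i = s * a0 := by
    rw [Finset.sum_congr rfl (fun i hi => if_neg (hc i hi))]
    rw [Finset.sum_const, card_classF (by omega) (by omega) c, nsmul_eq_mul]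
  rw [h2] at h1
  nlinarith

theorem sum_boole_int {β : Type*} (x : Finset β) (W : Finset β) [DecidableEq β] :
    ∑ i ∈ x, (if i ∈ W then (1:ℤ) else 0) = ((x.filter (· ∈ W)).card : ℤ) := by
  rw [Finset.sum_ite_mem]
  simp [Finset.filter_mem_eq_inter, Finset.inter_comm]

/-- Structure of roots: either a closed minimum cover, or disjoint from `W`. -/
theorem root_structure {s k : ℕ} (hs : 2 ≤ s) (hk : 3 ≤ k)
    (W : Finset (ZMod (s*k))) (a : ZMod (s*k) → ℤ) (a0 : ℤ) (ha0 : 1 ≤ a0)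
    (ha : ∀ i ∈ W, a0 + 1 ≤ a i ∧ a i ≤ 2 * a0)
    (x : Finset (ZMod (s*k)))
    (hroot : IsRoot (s*k) k (fun i => if i ∈ W then a i else a0) (((s : ℤ) + 1) * a0) x) :
    (x.card = s ∧ ∀ e ∈ x, e + ((k : ℕ) : ZMod (s*k)) ∈ x) ∨ (∀ w ∈ W, w ∉ x) := by
  obtain ⟨hcov, hsum⟩ := hroot
  have hbound : ∀ i ∈ x, a0 + (if i ∈ W then (1:ℤ) else 0) ≤ (if i ∈ W then a i else a0) := by
    intro i _
    by_cases hi : i ∈ W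
    · simp only [hi, if_true]; exact (ha i hi).1
    · simp [hi]
  have hsum_ge : a0 * x.card + ((x.filter (· ∈ W)).card : ℤ)
      ≤ ∑ i ∈ x, (if i ∈ W then a i else a0) := by
    calc a0 * x.card + ((x.filter (· ∈ W)).card : ℤ)
        = ∑ i ∈ x, (a0 + if i ∈ W then (1:ℤ) else 0) := by
          rw [Finset.sum_add_distrib, Finset.sum_const, nsmul_eq_mul, sum_boole_int, mul_comm]
      _ ≤ _ := Finset.sum_le_sum hbound
  rw [hsum] at hsum_ge
  have hcard_ge : s ≤ x.card := card_cover_ge (by omega) (by omega) hcov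
  by_cases hc : x.card = s
  · exact Or.inl ⟨hc, cover_card_eq_closed (by omega) (by omega) hcov hc⟩
  · right
    have hc1 : (s:ℤ) + 1 ≤ (x.card : ℤ) := by
      have : s + 1 ≤ x.card := by omega
      exact_mod_cast this
    have h2 : a0 * ((s:ℤ)+1) ≤ a0 * (x.card : ℤ) :=
      mul_le_mul_of_nonneg_left hc1 (by omega)
    have hB : ((x.filter (· ∈ W)).card : ℤ) ≤ 0 := by nlinarith
    have hB0 : (x.filter (· ∈ W)).card = 0 := by omega
    intro w hw hwx
    have : w ∈ x.filter (· ∈ W) := Finset.mem_filter.2 ⟨hwx, hw⟩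
    rw [Finset.card_eq_zero] at hB0
    simp [hB0] at this

/-- The weighted-sum linear functional. -/
def gfun {n : ℕ} [NeZero n] (b : ZMod n → ℝ) : (ZMod n → ℝ) →ₗ[ℝ] ℝ where
  toFun := fun v => ∑ i, b i * v i
  map_add' := by intro u v; simp [mul_add, Finset.sum_add_distrib]
  map_smul' := by intro c v; simp [Finset.mul_sum]; congr 1; ext i; ring

theorem gfun_apply {n : ℕ} [NeZero n] (b : ZMod n → ℝ) (v : ZMod n → ℝ) :
    gfun b v = ∑ i, b i * v i := rfl

/-- Evaluation-difference functional. -/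
def ffun {n : ℕ} [NeZero n] (w w' : ZMod n) : (ZMod n → ℝ) →ₗ[ℝ] ℝ :=
  (LinearMap.proj w : (ZMod n → ℝ) →ₗ[ℝ] ℝ) - LinearMap.proj w'

theorem ffun_apply {n : ℕ} [NeZero n] (w w' : ZMod n) (v : ZMod n → ℝ) :
    ffun w w' v = v w - v w' := rfl

theorem surj_prod {n : ℕ} [NeZero n] (w w' z : ZMod n) (b : ZMod n → ℝ)
    (hne : w ≠ w') (hzw : z ≠ w) (hzw' : z ≠ w') (hbz : b z ≠ 0) :
    Function.Surjective ((ffun w w').prod (gfun b)) := by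
  intro ⟨p, q⟩
  refine ⟨p • (Pi.single w 1 : ZMod n → ℝ) + ((q - p * b w) / b z) • (Pi.single z 1 : ZMod n → ℝ), ?_⟩
  have h1 : ∀ (c : ZMod n) (v : ZMod n → ℝ), gfun b (Pi.single c 1) = b c := by
    intro c v
    rw [gfun_apply]
    rw [Finset.sum_eq_single c]
    · simp
    · intro i _ hi; simp [Pi.single_apply, hi]
    · simp
  have hfw : ffun w w' (Pi.single w 1) = 1 := by
    rw [ffun_apply]; simp [Pi.single_apply, hne.symm, Ne.symm hne]
  have hfz : ffun w w' (Pi.single z 1) = 0 := by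
    rw [ffun_apply]; simp [Pi.single_apply, hzw, hzw']
  have e1 : ffun w w' (p • (Pi.single w 1 : ZMod n → ℝ)
      + ((q - p * b w) / b z) • (Pi.single z 1 : ZMod n → ℝ)) = p := by
    rw [map_add, map_smul, map_smul, hfw, hfz]; simp
  have e2 : gfun b (p • (Pi.single w 1 : ZMod n → ℝ)
      + ((q - p * b w) / b z) • (Pi.single z 1 : ZMod n → ℝ)) = q := by
    rw [map_add, map_smul, map_smul, h1 w 0, h1 z 0]
    simp only [smul_eq_mul]
    field_simp
    ring
  exact Prod.ext e1 e2

theorem finrank_ker_prod {n : ℕ} [NeZero n] (Φ : (ZMod n → ℝ) →ₗ[ℝ] ℝ × ℝ)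
    (hsurj : Function.Surjective Φ) :
    Module.finrank ℝ (LinearMap.ker Φ) = n - 2 := by
  have h := LinearMap.finrank_range_add_finrank_ker Φ
  rw [LinearMap.range_eq_top.2 hsurj, finrank_top] at h
  have h2 : Module.finrank ℝ (ℝ × ℝ) = 2 := by simp
  have h3 : Module.finrank ℝ (ZMod n → ℝ) = n := by
    rw [Module.finrank_pi]
    simp [ZMod.card]
  omega

theorem vectorSpan_le_ker {n : ℕ} [NeZero n] (S : Set (ZMod n → ℝ))
    (Φ : (ZMod n → ℝ) →ₗ[ℝ] ℝ × ℝ) (c₀ : ℝ × ℝ) (hS : ∀ v ∈ S, Φ v = c₀) :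
    vectorSpan ℝ S ≤ LinearMap.ker Φ := by
  rw [vectorSpan_def, Submodule.span_le]
  rintro d hd
  obtain ⟨u, hu, v, hv, rfl⟩ := hd
  simp only [SetLike.mem_coe, LinearMap.mem_ker, vsub_eq_sub, map_sub]
  rw [hS u hu, hS v hv, sub_self]

theorem dim_contradiction_prod {n : ℕ} [NeZero n] (hn : 3 ≤ n) (S : Set (ZMod n → ℝ))
    (Φ : (ZMod n → ℝ) →ₗ[ℝ] ℝ × ℝ) (c₀ : ℝ × ℝ) (hS : ∀ v ∈ S, Φ v = c₀)
    (hsurj : Function.Surjective Φ)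
    (hdim : Module.finrank ℝ (affineSpan ℝ S).direction = n - 1) : False := by
  rw [direction_affineSpan] at hdim
  have h1 : Module.finrank ℝ (vectorSpan ℝ S) ≤ n - 2 := by
    rw [← finrank_ker_prod Φ hsurj]
    exact Submodule.finrank_mono (vectorSpan_le_ker S Φ c₀ hS)
  omega

theorem dim_contradiction_finset {n : ℕ} [NeZero n] {c : ℕ} (hn : c + 2 ≤ n)
    (S : Set (ZMod n → ℝ)) (T : Finset (ZMod n → ℝ)) (hST : S ⊆ ↑T) (hT : T.card ≤ c)
    (hdim : Module.finrank ℝ (affineSpan ℝ S).direction = n - 1) : False := by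
  rw [direction_affineSpan] at hdim
  have h1 : vectorSpan ℝ S ≤ Submodule.span ℝ (T : Set (ZMod n → ℝ)) := by
    rw [vectorSpan_def, Submodule.span_le]
    rintro d hd
    obtain ⟨u, hu, v, hv, rfl⟩ := hd
    simp only [SetLike.mem_coe, vsub_eq_sub]
    exact sub_mem (Submodule.subset_span (hST hu)) (Submodule.subset_span (hST hv))
  have h2 : Module.finrank ℝ (vectorSpan ℝ S) ≤ c := by
    calc Module.finrank ℝ (vectorSpan ℝ S)
        ≤ Module.finrank ℝ (Submodule.span ℝ (T : Set (ZMod n → ℝ))) :=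
          Submodule.finrank_mono h1
      _ ≤ T.card := finrank_span_finset_le_card T
      _ ≤ c := hT
  omega

theorem build_cycle {s k : ℕ} (hs : 2 ≤ s) (hk : 3 ≤ k) [NeZero (s*k)]
    (W : Finset (ZMod (s*k))) (wfun : ZMod k → ZMod (s*k))
    (hwphi : ∀ c, phi s k (wfun c) = c)
    (hwmem : ∀ z : ZMod (s*k), z ∈ W ↔ wfun (phi s k z) = z) :
    ∃ (N : ℕ) (_ : 3 ≤ N) (v : ZMod N → ZMod (s*k)) (tt : ZMod k → ℕ),
      Function.Injective v ∧
      (∀ t : ZMod N, v (t+1) = v t + ((k:ℕ) : ZMod (s*k)) ∨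
        v (t+1) = v t + ((k+1:ℕ) : ZMod (s*k))) ∧
      (∀ t : ZMod N, v (t+1) = v t + ((k+1:ℕ) : ZMod (s*k)) ↔
        v t + ((k+1:ℕ) : ZMod (s*k)) ∈ W) ∧
      Set.ncard {t : ZMod N | v (t+1) = v t + ((k+1:ℕ) : ZMod (s*k))} = k ∧
      Set.ncard {t : ZMod N | v (t+1) = v t + ((k:ℕ) : ZMod (s*k))}
        = ∑ i ∈ Finset.range k, tt (i : ZMod k) ∧
      (∀ w ∈ W, ∃ t : ZMod N, v (t+1) = v t + ((k+1:ℕ) : ZMod (s*k)) ∧ w = v (t+1)) ∧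
      N = (∑ i ∈ Finset.range k, tt (i : ZMod k)) + k ∧
      (∀ c, tt c < s) ∧
      (∀ c, wfun (c+1) = wfun c + ((tt c * k + k + 1 : ℕ) : ZMod (s*k))) ∧
      ((∑ i ∈ Finset.range k, (tt (i:ZMod k) * k + k + 1) : ℕ) : ZMod (s*k)) = 0 := by
  haveI : NeZero k := ⟨by omega⟩
  have hs0 : 0 < s := by omega
  have hk0 : 0 < k := by omega
  -- step sizes
  have hstep : ∀ c : ZMod k, ∃ t, t < s ∧
      wfun (c+1) = wfun c + ((t*k + k + 1 : ℕ) : ZMod (s*k)) := by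
    intro c
    have h0 : phi s k (wfun (c+1) - wfun c - ((k+1 : ℕ) : ZMod (s*k))) = 0 := by
      rw [map_sub, map_sub, hwphi, hwphi, phi_natCast]
      push_cast [ZMod.natCast_self]
      ring
    obtain ⟨t, ht, hteq⟩ := phi_ker hs0 hk0 h0
    refine ⟨t, ht, ?_⟩
    have := sub_eq_iff_eq_add.1 (sub_eq_iff_eq_add.1 hteq)
    rw [this]; push_cast; ring
  choose tt httlt htteq using hstep
  -- the successor function
    -- f z = z + (k+1) if that lands in W, else z + k
  set f : ZMod (s*k) → ZMod (s*k) := fun z =>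
    if z + ((k+1:ℕ) : ZMod (s*k)) ∈ W then z + ((k+1:ℕ) : ZMod (s*k))
    else z + ((k:ℕ) : ZMod (s*k)) with hf
  -- membership condition along a class
  have hcond : ∀ (c : ZMod k) (j : ℕ), j ≤ tt c →
      ((wfun c + ((j*k:ℕ) : ZMod (s*k)) + ((k+1:ℕ) : ZMod (s*k)) ∈ W) ↔ j = tt c) := by
    intro c j hj
    have hphiz : phi s k (wfun c + ((j*k:ℕ) : ZMod (s*k)) + ((k+1:ℕ) : ZMod (s*k))) = c + 1 := by
      rw [map_add, map_add, hwphi, phi_natCast, phi_natCast]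
      push_cast [ZMod.natCast_self]
      ring
    rw [hwmem, hphiz, htteq c]
    constructor
    · intro h
      have h2 : ((tt c * k + k + 1 : ℕ) : ZMod (s*k)) = ((j*k + k + 1 : ℕ) : ZMod (s*k)) := by
        apply add_left_cancel (a := wfun c)
        rw [h]; push_cast; ring
      have h3 : ((tt c * k : ℕ) : ZMod (s*k)) = ((j*k : ℕ) : ZMod (s*k)) := by
        have := h2
        push_cast at this ⊢
        linear_combination this
      exact (mulk_inj hs0 hk0 (httlt c) (lt_of_le_of_lt hj (httlt c)) h3).symm
    · rintro rfl
      push_cast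
      ring
  have hAlt : ∀ (c : ZMod k) (j : ℕ), j < tt c →
      f (wfun c + ((j*k:ℕ) : ZMod (s*k))) = wfun c + (((j+1)*k:ℕ) : ZMod (s*k)) := by
    intro c j hj
    rw [hf]
    simp only
    rw [if_neg]
    · push_cast; ring
    · rw [hcond c j (le_of_lt hj)]; omega
  have hAeq : ∀ c : ZMod k, f (wfun c + ((tt c * k:ℕ) : ZMod (s*k))) = wfun (c+1) := by
    intro c
    rw [hf]
    simp only
    rw [if_pos]
    · rw [htteq c]; push_cast; ring
    · rw [hcond c (tt c) le_rfl]
  -- partial sums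
  set Q : ℕ → ℕ := fun c => ∑ i ∈ Finset.range c, (tt (i : ZMod k) + 1) with hQ
  have hQsucc : ∀ c, Q (c+1) = Q c + (tt (c:ZMod k) + 1) := by
    intro c; rw [hQ]; simp [Finset.sum_range_succ]
  have hQmono : ∀ c c', c ≤ c' → Q c ≤ Q c' := by
    intro c c' hcc
    exact Finset.sum_le_sum_of_subset (Finset.range_subset_range.2 hcc)
  set N := Q k with hN
  have hQge : ∀ c, c ≤ Q c := by
    intro c
    calc c = ∑ i ∈ Finset.range c, 1 := by simp
      _ ≤ Q c := Finset.sum_le_sum (fun i _ => by omega)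
  have hN3 : 3 ≤ N := le_trans hk (hQge k)
  set w₀ := wfun 0 with hw₀
  -- iterates within a class
  have hBj : ∀ c : ℕ, c < k → f^[Q c] w₀ = wfun (c:ZMod k) → ∀ j, j ≤ tt (c:ZMod k) →
      f^[Q c + j] w₀ = wfun (c:ZMod k) + ((j*k:ℕ) : ZMod (s*k)) := by
    intro c hc hQc j hj
    induction j with
    | zero => simpa using hQc
    | succ j ih =>
        have he : Q c + (j+1) = (Q c + j) + 1 := by omega
        rw [he, Function.iterate_succ_apply', ih (by omega), hAlt _ j (by omega)]
  have hB : ∀ c, c ≤ k → f^[Q c] w₀ = wfun (c:ZMod k) := by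
    intro c
    induction c with
    | zero => intro _; simp [hQ, hw₀]
    | succ c ih =>
        intro hc
        have hck : c < k := by omega
        have h1 := hBj c hck (ih (by omega)) (tt (c:ZMod k)) le_rfl
        have he : Q (c+1) = (Q c + tt (c:ZMod k)) + 1 := by rw [hQsucc]; omega
        rw [he, Function.iterate_succ_apply', h1, hAeq]
        congr 1
        push_cast
        ring
  have hperiod : f^[N] w₀ = w₀ := by
    have := hB k le_rfl
    rwa [ZMod.natCast_self, ← hw₀] at this
  -- decoding indices
  have hdecode : ∀ c, c ≤ k → ∀ i, i < Q c →
      ∃ c' < c, ∃ j ≤ tt (c':ZMod k), i = Q c' + j := by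
    intro c
    induction c with
    | zero => intro _ i hi; simp [hQ] at hi
    | succ c ih =>
        intro hc i hi
        by_cases hic : i < Q c
        · obtain ⟨c', hc', j, hj, hij⟩ := ih (by omega) i hic
          exact ⟨c', by omega, j, hj, hij⟩
        · refine ⟨c, by omega, i - Q c, ?_, by omega⟩
          rw [hQsucc] at hi
          omega
  -- injectivity of iterates below N
  have hinjN : ∀ i, i < N → ∀ i', i' < N → f^[i] w₀ = f^[i'] w₀ → i = i' := by
    intro i hi i' hi' heq
    obtain ⟨c, hc, j, hj, rfl⟩ := hdecode k le_rfl i hi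
    obtain ⟨c', hc', j', hj', rfl⟩ := hdecode k le_rfl i' hi'
    rw [hBj c hc (hB c (le_of_lt hc)) j hj,
      hBj c' hc' (hB c' (le_of_lt hc')) j' hj'] at heq
    have hphieq : (c : ZMod k) = (c' : ZMod k) := by
      have := congrArg (phi s k) heq
      rw [map_add, map_add, hwphi, hwphi, phi_natCast, phi_natCast] at this
      have hz : ∀ m : ℕ, ((m*k : ℕ) : ZMod k) = 0 := by
        intro m; push_cast [ZMod.natCast_self]; ring
      rwa [hz, hz, add_zero, add_zero] at this
    have hcc : c = c' := by
      have := congrArg ZMod.val hphieq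
      rwa [ZMod.val_natCast_of_lt hc, ZMod.val_natCast_of_lt hc'] at this
    subst hcc
    rw [hphieq] at heq
    have hjj : j = j' := by
      have h3 : ((j*k : ℕ) : ZMod (s*k)) = ((j'*k : ℕ) : ZMod (s*k)) := by
        exact add_left_cancel heq
      exact mulk_inj hs0 hk0 (lt_of_le_of_lt hj (httlt _))
        (lt_of_le_of_lt hj' (httlt _)) h3
    omega
  -- minimal period equals N
  have hper : Function.IsPeriodicPt f N w₀ := hperiod
  have hNpos : 0 < N := by omega
  have hmN : Function.minimalPeriod f w₀ = N := by
    have hle : Function.minimalPeriod f w₀ ≤ N := hper.minimalPeriod_le hNpos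
    have hpos : 0 < Function.minimalPeriod f w₀ := hper.minimalPeriod_pos hNpos
    by_contra hne
    have hlt : Function.minimalPeriod f w₀ < N := by omega
    have := hinjN _ hlt 0 hNpos (by
      rw [Function.iterate_minimalPeriod, Function.iterate_zero_apply])
    omega
  haveI : NeZero N := ⟨by omega⟩
  haveI : Fact (1 < N) := ⟨by omega⟩
  set v : ZMod N → ZMod (s*k) := fun t => f^[t.val] w₀ with hv
  have hv_inj : Function.Injective v := by
    intro t t' h
    have := hinjN t.val t.val_lt t'.val t'.val_lt h
    exact ZMod.val_injective N this
  have hvsucc : ∀ t : ZMod N, v (t+1) = f (v t) := by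
    intro t
    have h1 : (t+1 : ZMod N).val = (t.val + 1) % N := by
      rw [ZMod.val_add, ZMod.val_one]
    have h2 : (t.val + 1) % N = (t.val + 1) % Function.minimalPeriod f w₀ := by rw [hmN]
    rw [hv]
    simp only
    rw [h1, h2, Function.iterate_mod_minimalPeriod_eq, Function.iterate_succ_apply']
  have hkne : ((k:ℕ) : ZMod (s*k)) ≠ ((k+1:ℕ) : ZMod (s*k)) := by
    intro h
    have h1 : k < s*k := by nlinarith
    have h2 : k+1 < s*k := by nlinarith
    have := congrArg ZMod.val h
    rw [ZMod.val_natCast_of_lt h1, ZMod.val_natCast_of_lt h2] at this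
    omega
  have hstep_or : ∀ t : ZMod N, v (t+1) = v t + ((k:ℕ) : ZMod (s*k)) ∨
      v (t+1) = v t + ((k+1:ℕ) : ZMod (s*k)) := by
    intro t
    rw [hvsucc t]
    simp only [hf]
    by_cases hmem : v t + ((k+1:ℕ) : ZMod (s*k)) ∈ W
    · right; rw [if_pos hmem]
    · left; rw [if_neg hmem]
  have hlong_iff : ∀ t : ZMod N, v (t+1) = v t + ((k+1:ℕ) : ZMod (s*k)) ↔
      v t + ((k+1:ℕ) : ZMod (s*k)) ∈ W := by
    intro t
    rw [hvsucc t]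
    simp only [hf]
    by_cases hmem : v t + ((k+1:ℕ) : ZMod (s*k)) ∈ W
    · rw [if_pos hmem]; exact ⟨fun _ => hmem, fun _ => rfl⟩
    · rw [if_neg hmem]
      constructor
      · intro h; exact absurd (add_left_cancel h) hkne
      · intro h; exact absurd h hmem
  -- the long-arc positions
  have hQttlt : ∀ c, c < k → Q c + tt (c:ZMod k) < N := by
    intro c hc
    have h1 : Q c + tt (c:ZMod k) < Q (c+1) := by rw [hQsucc]; omega
    exact lt_of_lt_of_le h1 (hQmono _ _ (by omega))
  have hvec : ∀ c, c < k → v (((Q c + tt (c:ZMod k) : ℕ)) : ZMod N)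
      = wfun (c:ZMod k) + ((tt (c:ZMod k) * k : ℕ) : ZMod (s*k)) := by
    intro c hc
    rw [hv]
    simp only
    rw [ZMod.val_natCast_of_lt (hQttlt c hc)]
    exact hBj c hc (hB c (le_of_lt hc)) (tt (c:ZMod k)) le_rfl
  have hvcast : ∀ t : ZMod N, ((t.val : ℕ) : ZMod N) = t := fun t => ZMod.natCast_rightInverse t
  have hlongset : Finset.univ.filter (fun t : ZMod N => v t + ((k+1:ℕ) : ZMod (s*k)) ∈ W)
      = (Finset.range k).image (fun c => ((Q c + tt (c:ZMod k) : ℕ) : ZMod N)) := by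
    ext t
    simp only [Finset.mem_filter, Finset.mem_univ, true_and, Finset.mem_image, Finset.mem_range]
    constructor
    · intro hmem
      obtain ⟨c, hc, j, hj, hij⟩ := hdecode k le_rfl t.val t.val_lt
      have hvt : v t = wfun (c:ZMod k) + ((j*k : ℕ) : ZMod (s*k)) := by
        rw [hv]; simp only
        rw [hij]
        exact hBj c hc (hB c (le_of_lt hc)) j hj
      rw [hvt] at hmem
      have := (hcond (c:ZMod k) j hj).1 hmem
      refine ⟨c, hc, ?_⟩
      rw [← hvcast t, hij, this]
    · rintro ⟨c, hc, rfl⟩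
      rw [hvec c hc]
      have : wfun (c:ZMod k) + ((tt (c:ZMod k) * k : ℕ) : ZMod (s*k))
          + ((k+1:ℕ) : ZMod (s*k)) ∈ W ↔ tt (c:ZMod k) = tt (c:ZMod k) :=
        hcond (c:ZMod k) (tt (c:ZMod k)) le_rfl
      rw [this]
  have hQttinj : ∀ c ∈ Finset.range k, ∀ c' ∈ Finset.range k,
      ((Q c + tt (c:ZMod k) : ℕ) : ZMod N) = ((Q c' + tt (c':ZMod k) : ℕ) : ZMod N) → c = c' := by
    intro c hc c' hc' h
    rw [Finset.mem_range] at hc hc'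
    have hval := congrArg ZMod.val h
    rw [ZMod.val_natCast_of_lt (hQttlt c hc), ZMod.val_natCast_of_lt (hQttlt c' hc')] at hval
    rcases lt_trichotomy c c' with hlt | heq | hgt
    · exfalso
      have h1 : Q c + tt (c:ZMod k) < Q (c+1) := by rw [hQsucc]; omega
      have h2 : Q (c+1) ≤ Q c' := hQmono _ _ (by omega)
      omega
    · exact heq
    · exfalso
      have h1 : Q c' + tt (c':ZMod k) < Q (c'+1) := by rw [hQsucc]; omega
      have h2 : Q (c'+1) ≤ Q c := hQmono _ _ (by omega)
      omega
  have hcard : (Finset.univ.filter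
      (fun t : ZMod N => v t + ((k+1:ℕ) : ZMod (s*k)) ∈ W)).card = k := by
    rw [hlongset, Finset.card_image_of_injOn hQttinj, Finset.card_range]
  -- every w in W is a head
  have hheads : ∀ w ∈ W, ∃ t : ZMod N,
      v (t+1) = v t + ((k+1:ℕ) : ZMod (s*k)) ∧ w = v (t+1) := by
    intro w hw
    have hwfix : wfun (phi s k w) = w := (hwmem w).1 hw
    set c := phi s k w with hc
    set cnat := (c - 1).val with hcnat
    have hcnatlt : cnat < k := (c-1).val_lt
    have hcnatcast : ((cnat : ℕ) : ZMod k) = c - 1 := ZMod.natCast_rightInverse (c-1)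
    set t : ZMod N := ((Q cnat + tt ((cnat : ℕ):ZMod k) : ℕ) : ZMod N) with ht
    have hvt := hvec cnat hcnatlt
    have hmem : v t + ((k+1:ℕ) : ZMod (s*k)) ∈ W := by
      rw [← ht] at hvt
      rw [hvt]
      exact (hcond _ _ le_rfl).2 rfl
    have hlong := (hlong_iff t).2 hmem
    refine ⟨t, hlong, ?_⟩
    rw [← ht] at hvt
    rw [hlong, hvt, hcnatcast]
    have h2 : wfun c = wfun (c - 1) + ((tt (c - 1) * k + k + 1 : ℕ) : ZMod (s*k)) := by
      have h3 := htteq (c - 1)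
      rwa [sub_add_cancel] at h3
    rw [← hwfix, h2]
    push_cast
    ring
  -- total length
  have hNsum : N = (∑ i ∈ Finset.range k, tt (i : ZMod k)) + k := by
    rw [hN, hQ]
    simp [Finset.sum_add_distrib]
  -- telescoping
  have htel : ∀ c, c ≤ k → wfun (c:ZMod k)
      = wfun 0 + ((∑ i ∈ Finset.range c, (tt (i:ZMod k) * k + k + 1) : ℕ) : ZMod (s*k)) := by
    intro c
    induction c with
    | zero => intro _; simp
    | succ c ih =>
        intro hc
        have h1 : ((c+1 : ℕ) : ZMod k) = (c : ZMod k) + 1 := by push_cast; ring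
        rw [h1, htteq, ih (by omega), Finset.sum_range_succ]
        push_cast
        ring
  have hzero : ((∑ i ∈ Finset.range k, (tt (i:ZMod k) * k + k + 1) : ℕ) : ZMod (s*k)) = 0 := by
    have := htel k le_rfl
    rw [ZMod.natCast_self] at this
    exact (left_eq_add.1 this)
  have hNcardU : (Finset.univ : Finset (ZMod N)).card = N := by
    rw [Finset.card_univ, ZMod.card]
  have hnclong : Set.ncard {t : ZMod N | v (t+1) = v t + ((k+1:ℕ) : ZMod (s*k))} = k := by
    have hseteq : {t : ZMod N | v (t+1) = v t + ((k+1:ℕ) : ZMod (s*k))}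
        = ↑(Finset.univ.filter (fun t : ZMod N => v t + ((k+1:ℕ) : ZMod (s*k)) ∈ W)) := by
      ext t
      simp only [Set.mem_setOf_eq, Finset.coe_filter, Finset.mem_univ, true_and]
      exact hlong_iff t
    rw [hseteq, Set.ncard_coe_finset, hcard]
  have hncshort : Set.ncard {t : ZMod N | v (t+1) = v t + ((k:ℕ) : ZMod (s*k))}
      = ∑ i ∈ Finset.range k, tt (i : ZMod k) := by
    have hseteq : {t : ZMod N | v (t+1) = v t + ((k:ℕ) : ZMod (s*k))}
        = ↑(Finset.univ.filter (fun t : ZMod N => ¬ (v t + ((k+1:ℕ) : ZMod (s*k)) ∈ W))) := by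
      ext t
      simp only [Set.mem_setOf_eq, Finset.coe_filter, Finset.mem_univ, true_and]
      constructor
      · intro h hmem
        have := (hlong_iff t).2 hmem
        rw [h] at this
        exact hkne (add_left_cancel this)
      · intro hmem
        rcases hstep_or t with h | h
        · exact h
        · exact absurd ((hlong_iff t).1 h) hmem
    rw [hseteq, Set.ncard_coe_finset]
    have := Finset.card_filter_add_card_filter_not
      (s := (Finset.univ : Finset (ZMod N)))
      (p := fun t : ZMod N => v t + ((k+1:ℕ) : ZMod (s*k)) ∈ W)
    rw [hcard, hNcardU] at this
    omega
  exact ⟨N, hN3, v, tt, hv_inj, hstep_or, hlong_iff, hnclong, hncshort, hheads, hNsum,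
    httlt, htteq, hzero⟩


theorem gfun_charVec {n : ℕ} [NeZero n] (aa : ZMod n → ℤ) (x : Finset (ZMod n)) :
    gfun (fun i => ((aa i : ℤ) : ℝ)) (charVec n x) = ((∑ i ∈ x, aa i : ℤ) : ℝ) := by
  rw [gfun_apply]
  have h1 : ∀ i : ZMod n, ((aa i : ℤ) : ℝ) * charVec n x i
      = if i ∈ x then ((aa i : ℤ) : ℝ) else 0 := by
    intro i
    unfold charVec
    by_cases hi : i ∈ x <;> simp [hi]
  rw [Finset.sum_congr rfl (fun i _ => h1 i), Finset.sum_ite_mem, Finset.univ_inter]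
  push_cast
  rfl

theorem ffun_charVec {n : ℕ} [NeZero n] (w w' : ZMod n) (x : Finset (ZMod n))
    (h : w ∈ x ↔ w' ∈ x) : ffun w w' (charVec n x) = 0 := by
  rw [ffun_apply]
  unfold charVec
  by_cases hw : w ∈ x
  · rw [if_pos hw, if_pos (h.1 hw), sub_self]
  · rw [if_neg hw, if_neg (fun hw' => hw (h.2 hw')), sub_self]


end Stmt11Aux

theorem stmt11 (s k : ℕ) (hs : 2 ≤ s) (hk : 3 ≤ k)
    (W : Finset (ZMod (s * k))) (hWne : W.Nonempty) (hWproper : ∃ i : ZMod (s * k), i ∉ W)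
    (a : ZMod (s * k) → ℤ) (a0 : ℤ) (ha0 : 1 ≤ a0)
    (ha : ∀ i ∈ W, a0 + 1 ≤ a i ∧ a i ≤ 2 * a0)
    (hfacet : IsFacet (s * k) k (fun i => if i ∈ W then a i else a0) (((s : ℤ) + 1) * a0)) :
    ∃ D : SimpleDicycle (s * k) k, ∃ n2 n1 : ℕ,
      Set.ncard {t : ZMod D.m | D.v (t + 1) = D.v t + ((k + 1 : ℕ) : ZMod (s * k))} = k ∧
      {w : ZMod (s * k) | ∃ t : ZMod D.m,
          D.v (t + 1) = D.v t + ((k + 1 : ℕ) : ZMod (s * k)) ∧ w = D.v (t + 1)} = ↑W ∧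
      Set.ncard {t : ZMod D.m | D.v (t + 1) = D.v t + ((k : ℕ) : ZMod (s * k))} = n2 ∧
      n1 * s = n2 + k + 1 ∧
      1 ≤ k - n1 ∧
      s * k - n2 - k = s * (k - n1) + 1 ∧
      (s * (k - n1) + 1 + (k - n1) - 1) / (k - n1) = s + 1 ∧
      s + 1 > (s * k + k - 1) / k := by
  classical
  haveI hnz : NeZero (s * k) := ⟨by positivity⟩
  have hs0 : 0 < s := by omega
  have hk0 : 0 < k := by omega
  have hn6 : 6 ≤ s * k := by nlinarith
  obtain ⟨hvalid, hdim⟩ := hfacet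
  set aa : ZMod (s*k) → ℤ := fun i => if i ∈ W then a i else a0 with haa
  set α : ℤ := ((s : ℤ) + 1) * a0 with hα
  set S : Set (ZMod (s*k) → ℝ) :=
    {v : ZMod (s*k) → ℝ | ∃ x : Finset (ZMod (s*k)),
      IsRoot (s*k) k aa α x ∧ v = charVec (s*k) x} with hS
  -- Step 1: at most one element of W in each residue class
  have huniq : ∀ w ∈ W, ∀ w' ∈ W, Stmt11Aux.phi s k w = Stmt11Aux.phi s k w' → w = w' := by
    intro w hw w' hw' hph
    by_contra hne
    set b : ZMod (s*k) → ℝ := fun i => ((aa i : ℤ) : ℝ) with hb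
    have hbpos : ∀ i, 0 < b i := by
      intro i
      have hz1 : (1:ℤ) ≤ aa i := by
        simp only [haa]
        by_cases hi : i ∈ W
        · have := (ha i hi).1; rw [if_pos hi]; omega
        · rw [if_neg hi]; omega
      rw [hb]
      have h2 : ((1:ℤ):ℝ) ≤ ((aa i : ℤ):ℝ) := by exact_mod_cast hz1
      push_cast at h2
      simp only
      linarith
    -- all roots satisfy two independent linear equations
    have hroots : ∀ v ∈ S, ((Stmt11Aux.ffun w w').prod (Stmt11Aux.gfun b)) v
        = ((0 : ℝ), ((α : ℤ) : ℝ)) := by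
      rintro v ⟨x, hroot, rfl⟩
      have hiff : w ∈ x ↔ w' ∈ x := by
        rcases Stmt11Aux.root_structure hs hk W a a0 ha0 ha x hroot with ⟨hcard, hcl⟩ | hdisj
        · have h1 : Stmt11Aux.phi s k (w' - w) = 0 := by rw [map_sub, hph, sub_self]
          have h2 : Stmt11Aux.phi s k (w - w') = 0 := by rw [map_sub, hph, sub_self]
          obtain ⟨t1, _, ht1⟩ := Stmt11Aux.phi_ker hs0 hk0 h1
          obtain ⟨t2, _, ht2⟩ := Stmt11Aux.phi_ker hs0 hk0 h2
          constructor
          · intro hwx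
            have := Stmt11Aux.closed_mem hcl hwx t1
            rwa [← ht1, add_sub_cancel] at this
          · intro hwx
            have := Stmt11Aux.closed_mem hcl hwx t2
            rwa [← ht2, add_sub_cancel] at this
        · exact ⟨fun h => absurd h (hdisj w hw), fun h => absurd h (hdisj w' hw')⟩
      have hf0 : Stmt11Aux.ffun w w' (charVec (s*k) x) = 0 :=
        Stmt11Aux.ffun_charVec w w' x hiff
      have hg : Stmt11Aux.gfun b (charVec (s*k) x) = ((α : ℤ) : ℝ) := by
        rw [hb, Stmt11Aux.gfun_charVec aa x, hroot.2]
      exact Prod.ext hf0 hg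
    -- surjectivity
    have hz : ∃ z : ZMod (s*k), z ≠ w ∧ z ≠ w' := by
      by_contra hc
      push_neg at hc
      have hsub : (Finset.univ : Finset (ZMod (s*k))) ⊆ {w, w'} := by
        intro z _
        by_cases h : z = w
        · simp [h]
        · simp [hc z h]
      have h1 := Finset.card_le_card hsub
      have h2 : ({w, w'} : Finset (ZMod (s*k))).card ≤ 2 :=
        (Finset.card_insert_le _ _).trans (by simp)
      rw [Finset.card_univ, ZMod.card] at h1
      omega
    obtain ⟨z, hzw, hzw'⟩ := hz
    have hsurj := Stmt11Aux.surj_prod w w' z b hne hzw hzw' (ne_of_gt (hbpos z))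
    exact Stmt11Aux.dim_contradiction_prod (by omega) S _ _ hroots hsurj hdim
  -- Step 2: choose the unique representative of each class
  have hex : ∀ c : ZMod k, ∃ w, w ∈ W ∧ Stmt11Aux.phi s k w = c := by
    intro c
    obtain ⟨w, hwc, hwW⟩ := Stmt11Aux.class_meets_W hs hk W a a0 ha0 hvalid c
    exact ⟨w, hwW, Stmt11Aux.mem_classF.1 hwc⟩
  choose wfun hwW hwphi using hex
  have hwmem : ∀ z : ZMod (s*k), z ∈ W ↔ wfun (Stmt11Aux.phi s k z) = z := by
    intro z
    constructor
    · intro hz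
      exact huniq _ (hwW _) _ hz (hwphi _)
    · intro hz
      rw [← hz]
      exact hwW _
  -- Step 3: build the cycle
  obtain ⟨N, hN3, v, tt, hv_inj, hstep_or, hlong_iff, hnclong, hncshort, hheads, hNsum,
    httlt, htteq, hzero⟩ := Stmt11Aux.build_cycle hs hk W wfun hwphi hwmem
  set n2 : ℕ := ∑ i ∈ Finset.range k, tt (i : ZMod k) with hn2
  -- divisibility
  have hdvd : s ∣ (n2 + k + 1) := by
    have h1 : (∑ i ∈ Finset.range k, (tt (i:ZMod k) * k + k + 1)) = k * (n2 + k + 1) := by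
      rw [hn2, Finset.sum_add_distrib, Finset.sum_add_distrib, ← Finset.sum_mul,
        Finset.sum_const, Finset.sum_const, Finset.card_range, smul_eq_mul, smul_eq_mul,
        mul_one]
      ring
    have h2 : (s*k) ∣ (∑ i ∈ Finset.range k, (tt (i:ZMod k) * k + k + 1)) :=
      (ZMod.natCast_eq_zero_iff _ _).1 hzero
    rw [h1] at h2
    obtain ⟨c, hc⟩ := h2
    refine ⟨c, ?_⟩
    have : k * (n2 + k + 1) = k * (s * c) := by rw [hc]; ring
    exact Nat.eq_of_mul_eq_mul_left hk0 this
  obtain ⟨n1, hn1s⟩ : ∃ n1 : ℕ, n1 * s = n2 + k + 1 :=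
    ⟨(n2 + k + 1) / s, Nat.div_mul_cancel hdvd⟩
  have hn2le : n2 ≤ k * (s - 1) := by
    rw [hn2]
    calc ∑ i ∈ Finset.range k, tt (i : ZMod k)
        ≤ ∑ _i ∈ Finset.range k, (s-1) := Finset.sum_le_sum (fun i _ => by
          have := httlt (i : ZMod k); omega)
      _ = k * (s-1) := by rw [Finset.sum_const, Finset.card_range, smul_eq_mul]
  -- Step 4: exclude n1 = k (the segment case)
  have hn1lt : n1 < k := by
    have hn1le : n1 ≤ k := by
      by_contra hc
      push_neg at hc
      have h1 : (k+1) * s ≤ n1 * s := Nat.mul_le_mul_right s hc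
      have h3 : k*(s-1) = k*s - k := by
        cases s with
        | zero => simp
        | succ s' => rw [Nat.succ_sub_one, Nat.mul_succ, Nat.add_sub_cancel]
      have h5 : k ≤ k*s := Nat.le_mul_of_pos_right k hs0
      have h2 : n2 + k + 1 ≤ k*s + 1 := by omega
      have h4 : (k+1)*s = k*s + s := by ring
      omega
    by_contra hc
    push_neg at hc
    have hn1k : n1 = k := by omega
    have hn2eq : n2 + 1 = k * (s-1) := by
      have h2 : k * s = n2 + k + 1 := by rw [← hn1s, hn1k]
      have h3 : k*(s-1) = k*s - k := by
        cases s with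
        | zero => simp
        | succ s' => rw [Nat.succ_sub_one, Nat.mul_succ, Nat.add_sub_cancel]
      omega
    -- locate the unique class with tt = s-2
    have hconst : (∑ _i ∈ Finset.range k, (s-1)) = k * (s-1) := by
      rw [Finset.sum_const, Finset.card_range, smul_eq_mul]
    have hsum1 : ∑ i ∈ Finset.range k, ((s-1) - tt (i:ZMod k)) = 1 := by
      have h1 : (∑ i ∈ Finset.range k, ((s-1) - tt (i:ZMod k))) + n2 = k * (s-1) := by
        rw [← hconst, hn2, ← Finset.sum_add_distrib]
        exact Finset.sum_congr rfl (fun i _ => by have := httlt (i:ZMod k); omega)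
      omega
    obtain ⟨c0, hc0mem, hc0ne⟩ := Finset.exists_ne_zero_of_sum_ne_zero (by
      rw [hsum1]; omega : ∑ i ∈ Finset.range k, ((s-1) - tt (i:ZMod k)) ≠ 0)
    have herase : ∑ i ∈ (Finset.range k).erase c0, ((s-1) - tt (i:ZMod k)) = 0 := by
      have h5 := Finset.sum_erase_add (Finset.range k)
        (fun i => (s-1) - tt (i:ZMod k)) hc0mem
      omega
    have hother : ∀ c ∈ Finset.range k, c ≠ c0 → tt (c:ZMod k) = s - 1 := by
      intro c hcmem hcne
      have h1 := (Finset.sum_eq_zero_iff.1 herase) c (Finset.mem_erase.2 ⟨hcne, hcmem⟩)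
      have := httlt (c:ZMod k)
      omega
    have hotherZ : ∀ d : ZMod k, d ≠ (c0 : ZMod k) → tt d = s - 1 := by
      intro d hd
      haveI : NeZero k := ⟨by omega⟩
      have h1 : d = ((d.val : ℕ) : ZMod k) := (ZMod.natCast_rightInverse d).symm
      have h2 : d.val ≠ c0 := by
        intro h
        apply hd
        rw [h1, h]
      rw [h1]
      exact hother d.val (Finset.mem_range.2 d.val_lt) h2
    -- consecutive chain
    have hchain1 : ∀ d : ZMod k, d ≠ (c0 : ZMod k) → wfun (d + 1) = wfun d + 1 := by
      intro d hd
      rw [htteq d, hotherZ d hd]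
      have h1 : ((s-1) * k + k + 1 : ℕ) = s * k + 1 := by
        cases s with
        | zero => omega
        | succ s' => rw [Nat.succ_sub_one, Nat.succ_mul]
      rw [h1]
      have h2 : ((s*k + 1 : ℕ) : ZMod (s*k)) = 1 := by
        rw [Nat.cast_add, ZMod.natCast_self, Nat.cast_one, zero_add]
      rw [h2]
    set bb := wfun ((c0:ZMod k) + 1) with hbb
    have hchain : ∀ j : ℕ, j ≤ k - 1 →
        wfun ((c0:ZMod k) + 1 + (j:ZMod k)) = bb + ((j:ℕ) : ZMod (s*k)) := by
      intro j
      induction j with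
      | zero => intro _; simp [hbb]
      | succ j ih =>
          intro hj
          have hd : (c0:ZMod k) + 1 + (j:ZMod k) ≠ (c0:ZMod k) := by
            intro h
            have h2 : ((1 + j : ℕ) : ZMod k) = 0 := by
              have h4 : (c0:ZMod k) + ((1 + j : ℕ) : ZMod k) = (c0:ZMod k) + 0 := by
                push_cast
                rw [add_zero, ← add_assoc]
                exact h
              exact add_left_cancel h4
            have h5 := (ZMod.natCast_eq_zero_iff _ _).1 h2
            have := Nat.le_of_dvd (by omega) h5
            omega
          have h1 : (c0:ZMod k) + 1 + ((j+1 : ℕ):ZMod k)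
              = ((c0:ZMod k) + 1 + (j:ZMod k)) + 1 := by push_cast; ring
          rw [h1, hchain1 _ hd, ih (by omega)]
          push_cast
          ring
    -- W is a segment
    have hWeq : W = Cseg (s*k) k bb := by
      ext w
      unfold Cseg
      simp only [Finset.mem_image, Finset.mem_range]
      constructor
      · intro hw
        haveI : NeZero k := ⟨by omega⟩
        set j := (Stmt11Aux.phi s k w - ((c0:ZMod k) + 1)).val with hj
        refine ⟨j, (Stmt11Aux.phi s k w - ((c0:ZMod k) + 1)).val_lt, ?_⟩
        have h1 : (c0:ZMod k) + 1 + ((j:ℕ) : ZMod k) = Stmt11Aux.phi s k w := by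
          rw [hj, ZMod.natCast_rightInverse]
          ring
        have h2 := hchain j (by
          have := (Stmt11Aux.phi s k w - ((c0:ZMod k) + 1)).val_lt
          omega)
        rw [h1] at h2
        rw [← ((hwmem w).1 hw), h2]
      · rintro ⟨j, hjk, rfl⟩
        have h2 := hchain j (by omega)
        rw [← h2]
        rw [hwmem, hwphi]
    -- every root is a residue class
    have hrootclass : ∀ vv ∈ S, vv ∈ ((Finset.range k).image
        (fun c => charVec (s*k) (Stmt11Aux.classF s k ((c:ℕ) : ZMod k))) :
          Finset (ZMod (s*k) → ℝ)) := by
      rintro vv ⟨x, hroot, rfl⟩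
      have hmeet : (x ∩ Cseg (s*k) k bb).Nonempty := hroot.1 bb
      rcases Stmt11Aux.root_structure hs hk W a a0 ha0 ha x hroot with ⟨hcard, hcl⟩ | hdisj
      · obtain ⟨e, he⟩ := Finset.card_pos.1 (by omega : 0 < x.card)
        have hsub : Stmt11Aux.classF s k (Stmt11Aux.phi s k e) ⊆ x := by
          intro z hz
          rw [Stmt11Aux.mem_classF] at hz
          have h1 : Stmt11Aux.phi s k (z - e) = 0 := by rw [map_sub, hz, sub_self]
          obtain ⟨t1, _, ht1⟩ := Stmt11Aux.phi_ker hs0 hk0 h1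
          have := Stmt11Aux.closed_mem hcl he t1
          rwa [← ht1, add_sub_cancel] at this
        have hxeq : x = Stmt11Aux.classF s k (Stmt11Aux.phi s k e) := by
          refine (Finset.eq_of_subset_of_card_le hsub ?_).symm
          rw [hcard, Stmt11Aux.card_classF hs0 hk0]
        haveI : NeZero k := ⟨by omega⟩
        refine Finset.mem_image.2 ⟨(Stmt11Aux.phi s k e).val,
          Finset.mem_range.2 (Stmt11Aux.phi s k e).val_lt, ?_⟩
        rw [ZMod.natCast_rightInverse (Stmt11Aux.phi s k e), ← hxeq]
      · exfalso
        obtain ⟨z, hz⟩ := hmeet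
        rw [Finset.mem_inter] at hz
        have : z ∈ W := by rw [hWeq]; exact hz.2
        exact hdisj z this hz.1
    exact Stmt11Aux.dim_contradiction_finset (c := k) (by nlinarith) S _ hrootclass
      ((Finset.card_image_le).trans (by rw [Finset.card_range])) hdim
  -- Step 5: assemble
  refine ⟨⟨N, by omega, v, hv_inj, hstep_or⟩, n2, n1, ?_, ?_, ?_, ?_, ?_, ?_, ?_, ?_⟩
  · exact hnclong
  · ext w
    simp only [Set.mem_setOf_eq, Finset.coe_sort_coe, Finset.mem_coe]
    constructor
    · rintro ⟨t, hlong, rfl⟩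
      rw [hlong]
      exact (hlong_iff t).1 hlong
    · intro hw
      exact hheads w hw
  · exact hncshort
  · exact hn1s
  · omega
  · have h1 : s*(k - n1) + s*n1 = s*k := by
      rw [← Nat.mul_add]
      congr 1
      omega
    have h2 : s*n1 = n2 + k + 1 := by rw [mul_comm]; exact hn1s
    omega
  · have hk' : 0 < k - n1 := by omega
    have h1 : s*(k - n1) + 1 + (k - n1) - 1 = (s+1)*(k - n1) := by
      have : (s+1)*(k-n1) = s*(k-n1) + (k-n1) := by ring
      omega
    rw [h1, Nat.mul_div_cancel _ hk']
  · have h1 : (s+1)*k = s*k + k := by ring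
    rw [gt_iff_lt, Nat.div_lt_iff_lt_mul hk0]
    omega
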